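/- arXiv:2006.08379 — 4 statements merged into one kernel-verified Lean document; each statement's English description precedes it below -/
import Mathlib

section
/- Let φ : [1,∞) → (0,∞) be Borel measurable and slowly varying at infinity in the sense of Karamata. Then for all real numbers 0 < a < b, the convergence φ(λt)/φ(t) → 1 as t → ∞ is uniform with respect to λ ∈ [a,b]; that is, sup_{λ ∈ [a,b]} |φ(λt)/φ(t) − 1| → 0 as t → ∞ (the suprema being taken over those t with λt ≥ 1 for all λ ∈ [a,b]). -/
open Filter Topology

/-- `φ : [1,∞) → (0,∞)` is slowly varying at infinity in the sense of Karamata: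
`φ(λt)/φ(t) → 1` as `t → ∞` for every `λ > 0`. -/
def SlowlyVarying (φ : ℝ → ℝ) : Prop :=
  ∀ l : ℝ, 0 < l → Tendsto (fun t : ℝ => φ (l * t) / φ t) atTop (𝓝 1)

/-- The class `M`: Borel measurable functions `φ : [1,∞) → (0,∞)` such that `φ` and `1/φ`
are bounded on each compact subset of `[1,∞)` and `φ` is slowly varying at infinity. -/
structure MemM (φ : ℝ → ℝ) : Prop where
  measurable : Measurable ((Set.Ici (1 : ℝ)).restrict φ)
  pos : ∀ t : ℝ, 1 ≤ t → 0 < φ t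
  bddOnCompacts : ∀ K : Set ℝ, IsCompact K → K ⊆ Set.Ici 1 →
    ∃ C : ℝ, ∀ t ∈ K, φ t ≤ C ∧ (φ t)⁻¹ ≤ C
  slowlyVarying : SlowlyVarying φ

open MeasureTheory

lemma uniform_key (h : ℝ → ℝ) (hm : Measurable h)
    (hpt : ∀ u : ℝ, Tendsto (fun x => h (x + u) - h x) atTop (𝓝 0))
    (M : ℝ) (hM : 0 ≤ M) {ε : ℝ} (hε : 0 < ε) :
    ∃ X : ℝ, ∀ x : ℝ, X ≤ x → ∀ u ∈ Set.Icc (0 : ℝ) M, |h (x + u) - h x| < ε := by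
  by_contra hcon
  push_neg at hcon
  choose xf hxf uf huf hbig using hcon
  set xn : ℕ → ℝ := fun n => xf (n : ℝ) with hxn
  set un : ℕ → ℝ := fun n => uf (n : ℝ) with hun
  have hxn_tendsto : Tendsto xn atTop atTop :=
    tendsto_atTop_mono (fun n => hxf (n : ℝ)) tendsto_natCast_atTop_atTop
  have hun_mem : ∀ n, un n ∈ Set.Icc (0 : ℝ) M := fun n => huf (n : ℝ)
  have hyn_tendsto : Tendsto (fun n => xn n + un n) atTop atTop :=
    tendsto_atTop_mono (fun n => le_add_of_nonneg_right (hun_mem n).1) hxn_tendsto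
  set f : ℕ → ℝ → ℝ := fun n v => h (xn n + v) - h (xn n) with hf
  set g : ℕ → ℝ → ℝ := fun n v => h (xn n + un n + v) - h (xn n + un n) with hg
  have hfm : ∀ n, StronglyMeasurable (f n) := fun n =>
    ((hm.comp (measurable_id.const_add (xn n))).sub measurable_const).stronglyMeasurable
  have hgm : ∀ n, StronglyMeasurable (g n) := fun n =>
    ((hm.comp (measurable_id.const_add (xn n + un n))).sub measurable_const).stronglyMeasurable
  have h0m : StronglyMeasurable (fun _ : ℝ => (0 : ℝ)) := stronglyMeasurable_const
  set s : Set ℝ := Set.Icc 0 (M + 1) with hs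
  have hsm : MeasurableSet s := measurableSet_Icc
  have hsvol : volume s = ENNReal.ofReal (M + 1) := by
    rw [hs, Real.volume_Icc]; norm_num
  have hsne : volume s ≠ ⊤ := by rw [hsvol]; exact ENNReal.ofReal_ne_top
  have hfg : ∀ᵐ v ∂(volume : Measure ℝ), v ∈ s →
      Tendsto (fun n => f n v) atTop (𝓝 ((fun _ : ℝ => (0 : ℝ)) v)) :=
    Filter.Eventually.of_forall fun v _ => (hpt v).comp hxn_tendsto
  have hgg : ∀ᵐ v ∂(volume : Measure ℝ), v ∈ s →
      Tendsto (fun n => g n v) atTop (𝓝 ((fun _ : ℝ => (0 : ℝ)) v)) :=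
    Filter.Eventually.of_forall fun v _ => (hpt v).comp hyn_tendsto
  obtain ⟨t₁, ht₁s, ht₁m, ht₁μ, ht₁u⟩ :=
    tendstoUniformlyOn_of_ae_tendsto hfm h0m hsm hsne hfg (by norm_num : (0:ℝ) < 1/4)
  obtain ⟨t₂, ht₂s, ht₂m, ht₂μ, ht₂u⟩ :=
    tendstoUniformlyOn_of_ae_tendsto hgm h0m hsm hsne hgg (by norm_num : (0:ℝ) < 1/4)
  have h1 := (Metric.tendstoUniformlyOn_iff.mp ht₁u) (ε/2) (half_pos hε)
  have h2 := (Metric.tendstoUniformlyOn_iff.mp ht₂u) (ε/2) (half_pos hε)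
  obtain ⟨n, hn1, hn2⟩ := (h1.and h2).exists
  set E₁ : Set ℝ := s \ t₁ with hE₁
  set E₂ : Set ℝ := s \ t₂ with hE₂
  have hE₁m : MeasurableSet E₁ := hsm.diff ht₁m
  have hE₂m : MeasurableSet E₂ := hsm.diff ht₂m
  have hmeasE : ∀ (t : Set ℝ), t ⊆ s → MeasurableSet t → volume t ≤ ENNReal.ofReal (1/4) →
      ENNReal.ofReal (M + 3/4) ≤ volume (s \ t) := by
    intro t hts htm htμ
    have := measure_diff hts htm.nullMeasurableSet (ne_top_of_le_ne_top hsne (measure_mono hts))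
    rw [this, hsvol]
    have : ENNReal.ofReal (M + 3/4) + ENNReal.ofReal (1/4) ≤ ENNReal.ofReal (M + 1) := by
      rw [← ENNReal.ofReal_add (by linarith) (by norm_num)]
      exact ENNReal.ofReal_le_ofReal (by linarith)
    exact ENNReal.le_sub_of_add_le_right (ne_top_of_le_ne_top ENNReal.ofReal_ne_top htμ)
      (le_trans (add_le_add (le_refl _) htμ) this)
  have hμE₁ := hmeasE t₁ ht₁s ht₁m ht₁μ
  have hμE₂ := hmeasE t₂ ht₂s ht₂m ht₂μ
  -- the translate of E₂ by un n
  set A : Set ℝ := (fun v => -(un n) + v) ⁻¹' E₂ with hA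
  have hAm : MeasurableSet A := hE₂m.preimage (measurable_id.const_add _)
  have hAvol : volume A = volume E₂ := measure_preimage_add volume _ _
  have hinter : (E₁ ∩ A).Nonempty := by
    by_contra hemp
    have hdisj : Disjoint E₁ A :=
      Set.disjoint_iff_inter_eq_empty.mpr (Set.not_nonempty_iff_eq_empty.mp hemp)
    have hsub : E₁ ∪ A ⊆ Set.Icc (0 : ℝ) (2*M + 1) := by
      rintro v (hv | hv)
      · have := hv.1; rw [hs] at this
        exact ⟨this.1, by linarith [this.2]⟩
      · have hv2 : -(un n) + v ∈ s := hv.1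
        rw [hs] at hv2
        have h0 := (hun_mem n).1; have h1 := (hun_mem n).2
        exact ⟨by linarith [hv2.1], by linarith [hv2.2]⟩
    have hle : volume (E₁ ∪ A) ≤ ENNReal.ofReal (2*M + 1) := by
      refine le_trans (measure_mono hsub) ?_
      rw [Real.volume_Icc]
      exact ENNReal.ofReal_le_ofReal (by linarith)
    rw [measure_union hdisj hAm, hAvol] at hle
    have hge : ENNReal.ofReal (M + 3/4) + ENNReal.ofReal (M + 3/4) ≤ volume E₁ + volume E₂ :=
      add_le_add hμE₁ hμE₂
    rw [← ENNReal.ofReal_add (by linarith) (by linarith)] at hge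
    have := le_trans hge hle
    rw [ENNReal.ofReal_le_ofReal_iff (by linarith)] at this
    linarith
  obtain ⟨v, hvE₁, hvA⟩ := hinter
  set w : ℝ := -(un n) + v with hw
  have hwE₂ : w ∈ E₂ := hvA
  have b1 : |f n v| < ε / 2 := by
    have := hn1 v hvE₁
    rwa [dist_comm, Real.dist_eq, sub_zero] at this
  have b2 : |g n w| < ε / 2 := by
    have := hn2 w hwE₂
    rwa [dist_comm, Real.dist_eq, sub_zero] at this
  have hkey : xn n + un n + w = xn n + v := by rw [hw]; ring
  have hb := hbig (n : ℝ)
  simp only [hf] at b1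
  simp only [hg] at b2
  rw [hkey] at b2
  -- |h (xn n + un n) - h (xn n)| ≥ ε, contradiction
  have : |h (xn n + un n) - h (xn n)| < ε := by
    have tri : |h (xn n + un n) - h (xn n)| ≤
        |h (xn n + v) - h (xn n)| + |h (xn n + v) - h (xn n + un n)| := by
      have : h (xn n + un n) - h (xn n) =
          (h (xn n + v) - h (xn n)) - (h (xn n + v) - h (xn n + un n)) := by ring
      rw [this]
      exact abs_sub _ _
    calc |h (xn n + un n) - h (xn n)| ≤ _ := tri
      _ < ε/2 + ε/2 := by
          exact add_lt_add b1 b2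
      _ = ε := by ring
  exact absurd hb (not_le.mpr this)

lemma uniform_Icc (h : ℝ → ℝ) (hm : Measurable h)
    (hpt : ∀ u : ℝ, Tendsto (fun x => h (x + u) - h x) atTop (𝓝 0))
    (A B : ℝ) (hAB : A ≤ B) {ε : ℝ} (hε : 0 < ε) :
    ∃ X : ℝ, ∀ x : ℝ, X ≤ x → ∀ u ∈ Set.Icc A B, |h (x + u) - h x| < ε := by
  obtain ⟨X₁, hX₁⟩ := uniform_key h hm hpt (B - A) (by linarith) (half_pos hε)
  obtain ⟨X₂, hX₂⟩ := Metric.tendsto_atTop.mp (hpt A) (ε/2) (half_pos hε)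
  refine ⟨max (X₁ - A) X₂, fun x hx u hu => ?_⟩
  have h1 : |h ((x + A) + (u - A)) - h (x + A)| < ε/2 := by
    refine hX₁ (x + A) (by have := le_trans (le_max_left (X₁ - A) X₂) hx; linarith)
      (u - A) ⟨by linarith [hu.1], by linarith [hu.2]⟩
  have h2 : |h (x + A) - h x| < ε/2 := by
    have := hX₂ x (le_trans (le_max_right _ _) hx)
    rwa [Real.dist_eq, sub_zero] at this
  have hxu : (x + A) + (u - A) = x + u := by ring
  rw [hxu] at h1
  calc |h (x + u) - h x| = |(h (x + u) - h (x + A)) + (h (x + A) - h x)| := by ring_nf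
    _ ≤ |h (x + u) - h (x + A)| + |h (x + A) - h x| := abs_add_le _ _
    _ < ε/2 + ε/2 := add_lt_add h1 h2
    _ = ε := by ring

theorem slowlyVarying_uniform_convergence_aux (φ : ℝ → ℝ)
    (hmeas : Measurable ((Set.Ici (1 : ℝ)).restrict φ))
    (hpos : ∀ t : ℝ, 1 ≤ t → 0 < φ t)
    (hsv : ∀ l : ℝ, 0 < l → Tendsto (fun t : ℝ => φ (l * t) / φ t) atTop (𝓝 1))
    (a b : ℝ) (ha : 0 < a) (hab : a < b) :
    ∀ ε : ℝ, 0 < ε → ∃ T : ℝ, ∀ t : ℝ, T ≤ t →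
      ∀ l ∈ Set.Icc a b, |φ (l * t) / φ t - 1| < ε := by
  intro ε hε
  -- modify φ outside [1, ∞) to make it globally measurable
  set φ' : ℝ → ℝ := (Set.Ici (1:ℝ)).piecewise φ (fun _ => 1) with hφ'def
  have hφ'eq : ∀ t : ℝ, 1 ≤ t → φ' t = φ t := fun t ht =>
    Set.piecewise_eq_of_mem _ _ _ ht
  have hφ'm : Measurable φ' := by
    refine measurable_of_restrict_of_restrict_compl (measurableSet_Ici : MeasurableSet (Set.Ici (1:ℝ))) ?_ ?_
    · have : (Set.Ici (1:ℝ)).restrict φ' = (Set.Ici (1:ℝ)).restrict φ := by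
        ext x
        simp only [Set.restrict_apply, hφ'def]
        exact Set.piecewise_eq_of_mem (Set.Ici (1:ℝ)) φ (fun _ => 1) x.2
      change Measurable ((Set.Ici (1:ℝ)).restrict φ')
      rw [this]; exact hmeas
    · have : ((Set.Ici (1:ℝ))ᶜ).restrict φ' = fun _ => (1:ℝ) := by
        ext x
        simp only [Set.restrict_apply, hφ'def]
        exact Set.piecewise_eq_of_notMem (Set.Ici (1:ℝ)) φ (fun _ => 1) x.2
      change Measurable (((Set.Ici (1:ℝ))ᶜ).restrict φ')
      rw [this]; exact measurable_const
  set h : ℝ → ℝ := fun x => Real.log (φ' (Real.exp x)) with hhdef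
  have hm : Measurable h :=
    Real.measurable_log.comp (hφ'm.comp Real.measurable_exp)
  have hpt : ∀ u : ℝ, Tendsto (fun x => h (x + u) - h x) atTop (𝓝 0) := by
    intro u
    have h1 : Tendsto (fun x => φ (Real.exp u * Real.exp x) / φ (Real.exp x)) atTop (𝓝 1) :=
      (hsv (Real.exp u) (Real.exp_pos u)).comp Real.tendsto_exp_atTop
    have h2 : Tendsto (fun x => Real.log (φ (Real.exp u * Real.exp x) / φ (Real.exp x)))
        atTop (𝓝 0) := by
      have := ((Real.continuousAt_log one_ne_zero).tendsto).comp h1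
      simpa [Function.comp_def] using this
    refine Tendsto.congr' ?_ h2
    filter_upwards [eventually_ge_atTop (max 0 (-u))] with x hx
    have hx0 : (0:ℝ) ≤ x := le_trans (le_max_left _ _) hx
    have hxu0 : (0:ℝ) ≤ x + u := by have := le_trans (le_max_right _ _) hx; linarith
    have he1 : (1:ℝ) ≤ Real.exp x := Real.one_le_exp hx0
    have he2 : (1:ℝ) ≤ Real.exp (x + u) := Real.one_le_exp hxu0
    have hp1 : 0 < φ (Real.exp x) := hpos _ he1
    have hp2 : 0 < φ (Real.exp (x + u)) := hpos _ he2
    have hexp : Real.exp (x + u) = Real.exp u * Real.exp x := by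
      rw [Real.exp_add]; ring
    have he2' : (1:ℝ) ≤ Real.exp u * Real.exp x := hexp ▸ he2
    have hp2' : 0 < φ (Real.exp u * Real.exp x) := by rw [← hexp]; exact hp2
    rw [hhdef]
    simp only
    rw [hexp, hφ'eq _ he2', hφ'eq _ he1,
      Real.log_div (ne_of_gt hp2') (ne_of_gt hp1)]
  set δ : ℝ := Real.log (1 + ε) with hδdef
  have hδ : 0 < δ := Real.log_pos (by linarith)
  obtain ⟨X, hX⟩ := uniform_Icc h hm hpt (Real.log a) (Real.log b)
    (Real.log_le_log ha hab.le) hδ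
  refine ⟨max (Real.exp X) (max 1 a⁻¹), fun t ht l hl => ?_⟩
  have ht1 : (1:ℝ) ≤ t := le_trans (le_trans (le_max_left _ _) (le_max_right _ _)) ht
  have ht0 : (0:ℝ) < t := lt_of_lt_of_le one_pos ht1
  have hta : a⁻¹ ≤ t := le_trans (le_trans (le_max_right _ _) (le_max_right _ _)) ht
  have hl0 : 0 < l := lt_of_lt_of_le ha hl.1
  have hlt1 : (1:ℝ) ≤ l * t := by
    have h1 : (1:ℝ) = a * a⁻¹ := (mul_inv_cancel₀ (ne_of_gt ha)).symm
    calc (1:ℝ) = a * a⁻¹ := h1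
      _ ≤ a * t := by apply mul_le_mul_of_nonneg_left hta ha.le
      _ ≤ l * t := mul_le_mul_of_nonneg_right hl.1 ht0.le
  have hx : X ≤ Real.log t := by
    rw [← Real.log_exp X]
    exact Real.log_le_log (Real.exp_pos X) (le_trans (le_max_left _ _) ht)
  have hu : Real.log l ∈ Set.Icc (Real.log a) (Real.log b) :=
    ⟨Real.log_le_log ha hl.1, Real.log_le_log hl0 hl.2⟩
  have key := hX (Real.log t) hx (Real.log l) hu
  have heq : h (Real.log t + Real.log l) - h (Real.log t) = Real.log (φ (l * t) / φ t) := by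
    rw [hhdef]
    simp only
    have hexp1 : Real.exp (Real.log t + Real.log l) = l * t := by
      rw [Real.exp_add, Real.exp_log ht0, Real.exp_log hl0]; ring
    have hexp2 : Real.exp (Real.log t) = t := Real.exp_log ht0
    rw [hexp1, hexp2, hφ'eq _ hlt1, hφ'eq _ ht1,
      Real.log_div (ne_of_gt (hpos _ hlt1)) (ne_of_gt (hpos _ ht1))]
  rw [heq] at key
  set r : ℝ := φ (l * t) / φ t with hr
  have hr0 : 0 < r := div_pos (hpos _ hlt1) (hpos _ ht1)
  rw [abs_lt] at key
  have hru : r < 1 + ε := by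
    have : r = Real.exp (Real.log r) := (Real.exp_log hr0).symm
    rw [this]
    calc Real.exp (Real.log r) < Real.exp δ := Real.exp_lt_exp.mpr key.2
      _ = 1 + ε := Real.exp_log (by linarith)
  have hrl : 1 - ε < r := by
    have h1 : Real.exp (-δ) < r := by
      have : r = Real.exp (Real.log r) := (Real.exp_log hr0).symm
      rw [this]
      exact Real.exp_lt_exp.mpr key.1
    have h2 : Real.exp (-δ) = (1 + ε)⁻¹ := by
      rw [Real.exp_neg, hδdef, Real.exp_log (by linarith)]
    have h3 : 1 - ε < (1 + ε)⁻¹ := by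
      rw [show (1+ε)⁻¹ = 1/(1+ε) by ring, lt_div_iff₀ (by linarith : (0:ℝ) < 1 + ε)]
      nlinarith
    rw [h2] at h1; linarith
  rw [abs_lt]; constructor <;> linarith

/-- Uniform convergence theorem for slowly varying functions: if `φ : [1,∞) → (0,∞)` is Borel
measurable and slowly varying at infinity in the sense of Karamata, then for all `0 < a < b`
the convergence `φ(λt)/φ(t) → 1` (`t → ∞`) is uniform with respect to `λ ∈ [a,b]`. -/
theorem slowlyVarying_uniform_convergence (φ : ℝ → ℝ)
    (hmeas : Measurable ((Set.Ici (1 : ℝ)).restrict φ))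
    (hpos : ∀ t : ℝ, 1 ≤ t → 0 < φ t)
    (hsv : SlowlyVarying φ)
    (a b : ℝ) (ha : 0 < a) (hab : a < b) :
    ∀ ε : ℝ, 0 < ε → ∃ T : ℝ, ∀ t : ℝ, T ≤ t →
      ∀ l ∈ Set.Icc a b, |φ (l * t) / φ t - 1| < ε :=
  slowlyVarying_uniform_convergence_aux φ hmeas hpos hsv a b ha hab
end

section
/- (Peetre's lemma, estimate from semi-Fredholmness.) Let X, Y, Z be Banach spaces (over ℝ or ℂ), let T : X → Y be a bounded linear operator whose kernel is finite-dimensional and whose range is closed, and let K : X → Z be an injective compact linear operator. Then there exists a constant c > 0 such that ‖x‖_X ≤ c(‖Tx‖_Y + ‖Kx‖_Z) for all x ∈ X. -/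
set_option maxHeartbeats 1000000


/-- **Peetre's lemma** (estimate from semi-Fredholmness).  Let `X, Y, Z` be Banach spaces over
`ℝ` or `ℂ`, let `T : X → Y` be a bounded linear operator with finite-dimensional kernel and
closed range, and let `K : X → Z` be an injective compact linear operator.  Then there is
`c > 0` with `‖x‖ ≤ c (‖Tx‖ + ‖Kx‖)` for all `x ∈ X`. -/
theorem peetre_lemma_estimate {𝕜 X Y Z : Type*} [RCLike 𝕜]
    [NormedAddCommGroup X] [NormedSpace 𝕜 X] [CompleteSpace X]
    [NormedAddCommGroup Y] [NormedSpace 𝕜 Y] [CompleteSpace Y]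
    [NormedAddCommGroup Z] [NormedSpace 𝕜 Z] [CompleteSpace Z]
    (T : X →L[𝕜] Y) (K : X →L[𝕜] Z)
    (hker : FiniteDimensional 𝕜 (LinearMap.ker (T : X →ₗ[𝕜] Y)))
    (hrange : IsClosed (Set.range T))
    (hKcompact : IsCompactOperator K)
    (hKinj : Function.Injective K) :
    ∃ c : ℝ, 0 < c ∧ ∀ x : X, ‖x‖ ≤ c * (‖T x‖ + ‖K x‖) := by
  classical
  set N : Submodule 𝕜 X := LinearMap.ker (T : X →ₗ[𝕜] Y) with hN
  haveI : IsClosed (N : Set X) := N.closed_of_finiteDimensional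
  -- Step 1: bounded-below estimate on the kernel via finite-dimensionality of `N`.
  obtain ⟨b, hb0, hb⟩ : ∃ b : NNReal, 0 < b ∧
      AntilipschitzWith b ((K : X →ₗ[𝕜] Z).comp N.subtype) := by
    apply LinearMap.exists_antilipschitzWith
    rw [LinearMap.ker_eq_bot]
    intro a a' h
    exact Subtype.ext (hKinj h)
  have hbker : ∀ y : N, ‖(y : X)‖ ≤ (b : ℝ) * ‖K (y : X)‖ := by
    intro y
    have := hb.le_mul_dist y 0
    simpa [dist_eq_norm] using this
  have hb0' : (0:ℝ) < (b : ℝ) := hb0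
  -- Step 2: the induced map on the quotient `X ⧸ N`.
  have hle : N ≤ LinearMap.ker (T : X →ₗ[𝕜] Y) := le_rfl
  have hbound : ∀ q : X ⧸ N, ‖N.liftQ (T : X →ₗ[𝕜] Y) hle q‖ ≤ ‖T‖ * ‖q‖ := by
    intro q
    refine le_of_forall_pos_le_add fun ε hε => ?_
    have hε' : 0 < ε / (‖T‖ + 1) := div_pos hε (by positivity)
    obtain ⟨m, rfl, hm⟩ := Submodule.Quotient.norm_mk_lt q hε'
    have h1 : N.liftQ (T : X →ₗ[𝕜] Y) hle (Submodule.Quotient.mk m) = T m := rfl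
    rw [h1]
    have h2 : ‖T‖ * (ε / (‖T‖ + 1)) ≤ ε := by
      rw [mul_div_assoc', div_le_iff₀ (by positivity : (0:ℝ) < ‖T‖ + 1)]
      nlinarith [norm_nonneg T, hε.le]
    calc ‖T m‖ ≤ ‖T‖ * ‖m‖ := T.le_opNorm m
      _ ≤ ‖T‖ * (‖(Submodule.Quotient.mk m : X ⧸ N)‖ + ε / (‖T‖ + 1)) :=
          mul_le_mul_of_nonneg_left hm.le (norm_nonneg T)
      _ = ‖T‖ * ‖(Submodule.Quotient.mk m : X ⧸ N)‖ + ‖T‖ * (ε / (‖T‖ + 1)) := by ring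
      _ ≤ ‖T‖ * ‖(Submodule.Quotient.mk m : X ⧸ N)‖ + ε := by linarith
  set Tbar : (X ⧸ N) →L[𝕜] Y :=
    LinearMap.mkContinuous (N.liftQ (T : X →ₗ[𝕜] Y) hle) ‖T‖ hbound with hTbar
  have hTbar_mk : ∀ x : X, Tbar (Submodule.Quotient.mk x) = T x := fun x => rfl
  have hTbarinj : Function.Injective Tbar := by
    have h : LinearMap.ker (N.liftQ (T : X →ₗ[𝕜] Y) hle) = ⊥ :=
      Submodule.ker_liftQ_eq_bot N (T : X →ₗ[𝕜] Y) hle le_rfl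
    exact LinearMap.ker_eq_bot.mp h
  have hTbarrange : Set.range Tbar = Set.range T := by
    ext y
    constructor
    · rintro ⟨q, rfl⟩
      obtain ⟨m, rfl⟩ := Submodule.Quotient.mk_surjective N q
      exact ⟨m, (hTbar_mk m).symm⟩
    · rintro ⟨x, rfl⟩
      exact ⟨Submodule.Quotient.mk x, hTbar_mk x⟩
  have hTbarclosed : IsClosed (Set.range Tbar) := hTbarrange ▸ hrange
  -- Open mapping theorem: `Tbar` is bounded below.
  set e := Tbar.equivRange hTbarinj hTbarclosed with he
  set S : LinearMap.range (Tbar : (X ⧸ N) →ₗ[𝕜] Y) →L[𝕜] X ⧸ N := e.symm.toContinuousLinearMap with hS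
  obtain ⟨C, hC0, hC⟩ : ∃ C : ℝ, 0 ≤ C ∧ ∀ q : X ⧸ N, ‖q‖ ≤ C * ‖Tbar q‖ := by
    refine ⟨‖S‖, ContinuousLinearMap.opNorm_nonneg S, fun q => ?_⟩
    have h1 : S (e q) = q := e.symm_apply_apply q
    have h2 : ‖e q‖ = ‖Tbar q‖ := rfl
    calc ‖q‖ = ‖S (e q)‖ := by rw [h1]
      _ ≤ ‖S‖ * ‖e q‖ := S.le_opNorm _
      _ = ‖S‖ * ‖Tbar q‖ := by rw [h2]
  -- Combine.
  have hK0 : (0:ℝ) ≤ ‖K‖ := norm_nonneg _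
  set c : ℝ := (1 + (b : ℝ) * ‖K‖) * (2 * C) + (b : ℝ) + 1 with hc
  have hc0 : 0 < c := by
    have h1 : 0 ≤ (1 + (b : ℝ) * ‖K‖) * (2 * C) := by positivity
    rw [hc]; linarith
  have hcoef : (1 + (b : ℝ) * ‖K‖) * (2 * C) ≤ c := by rw [hc]; linarith
  have hbc : (b : ℝ) ≤ c := by
    have h1 : 0 ≤ (1 + (b : ℝ) * ‖K‖) * (2 * C) := by positivity
    rw [hc]; linarith
  refine ⟨c, hc0, fun x => ?_⟩
  have hTx0 : (0:ℝ) ≤ ‖T x‖ := norm_nonneg _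
  have hKx0 : (0:ℝ) ≤ ‖K x‖ := norm_nonneg _
  have hq : ‖(Submodule.Quotient.mk x : X ⧸ N)‖ ≤ C * ‖T x‖ := by
    have := hC (Submodule.Quotient.mk x)
    rwa [hTbar_mk x] at this
  by_cases hx0 : ‖(Submodule.Quotient.mk x : X ⧸ N)‖ = 0
  · -- then x ∈ N
    have hxN : x ∈ N := by
      have h0 : (Submodule.Quotient.mk x : X ⧸ N) = 0 := by rwa [← norm_eq_zero]
      rwa [Submodule.Quotient.mk_eq_zero] at h0
    have h1 := hbker ⟨x, hxN⟩
    have h2 : (b : ℝ) * ‖K x‖ ≤ c * ‖K x‖ :=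
      mul_le_mul_of_nonneg_right hbc hKx0
    have h3 : c * ‖K x‖ ≤ c * (‖T x‖ + ‖K x‖) := by nlinarith
    calc ‖x‖ ≤ (b : ℝ) * ‖K x‖ := h1
      _ ≤ c * (‖T x‖ + ‖K x‖) := le_trans h2 h3
  · have hx0' : 0 < ‖(Submodule.Quotient.mk x : X ⧸ N)‖ :=
      lt_of_le_of_ne (norm_nonneg _) (Ne.symm hx0)
    obtain ⟨m, hm_eq, hm⟩ := Submodule.Quotient.norm_mk_lt
      (Submodule.Quotient.mk x : X ⧸ N) hx0'
    have hm0 : (0:ℝ) ≤ ‖m‖ := norm_nonneg _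
    have hm2 : ‖m‖ ≤ 2 * C * ‖T x‖ := by
      calc ‖m‖ ≤ 2 * ‖(Submodule.Quotient.mk x : X ⧸ N)‖ := by linarith
        _ ≤ 2 * (C * ‖T x‖) := by linarith
        _ = 2 * C * ‖T x‖ := by ring
    have hyN : x - m ∈ N := by
      rw [← Submodule.Quotient.eq]
      exact hm_eq.symm
    have hKy : ‖x - m‖ ≤ (b : ℝ) * ‖K (x - m)‖ := hbker ⟨x - m, hyN⟩
    have hKxm : ‖K (x - m)‖ ≤ ‖K x‖ + ‖K‖ * ‖m‖ := by
      have hsub : K (x - m) = K x - K m := map_sub K x m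
      calc ‖K (x - m)‖ = ‖K x - K m‖ := by rw [hsub]
        _ ≤ ‖K x‖ + ‖K m‖ := norm_sub_le _ _
        _ ≤ ‖K x‖ + ‖K‖ * ‖m‖ := by linarith [K.le_opNorm m]
    have hfin1 : (1 + (b : ℝ) * ‖K‖) * ‖m‖ ≤ (1 + (b : ℝ) * ‖K‖) * (2 * C * ‖T x‖) :=
      mul_le_mul_of_nonneg_left hm2 (by positivity)
    have hfin2 : (1 + (b : ℝ) * ‖K‖) * (2 * C * ‖T x‖) ≤ c * ‖T x‖ := by
      calc (1 + (b : ℝ) * ‖K‖) * (2 * C * ‖T x‖)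
          = ((1 + (b : ℝ) * ‖K‖) * (2 * C)) * ‖T x‖ := by ring
        _ ≤ c * ‖T x‖ := mul_le_mul_of_nonneg_right hcoef hTx0
    have hfin3 : (b : ℝ) * ‖K x‖ ≤ c * ‖K x‖ := mul_le_mul_of_nonneg_right hbc hKx0
    calc ‖x‖ = ‖m + (x - m)‖ := by rw [add_sub_cancel]
      _ ≤ ‖m‖ + ‖x - m‖ := norm_add_le _ _
      _ ≤ ‖m‖ + (b : ℝ) * (‖K x‖ + ‖K‖ * ‖m‖) := by
          have h5 := hKy.trans (mul_le_mul_of_nonneg_left hKxm hb0'.le)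
          linarith
      _ = (1 + (b : ℝ) * ‖K‖) * ‖m‖ + (b : ℝ) * ‖K x‖ := by ring
      _ ≤ c * ‖T x‖ + c * ‖K x‖ := by linarith
      _ = c * (‖T x‖ + ‖K x‖) := by ring
end

section
/- (Peetre's lemma, converse direction.) Let X, Y, Z be Banach spaces (over ℝ or ℂ), let T : X → Y be a bounded linear operator, and let K : X → Z be a compact linear operator. Suppose there exists c > 0 such that ‖x‖_X ≤ c(‖Tx‖_Y + ‖Kx‖_Z) for all x ∈ X. Then the kernel of T is finite-dimensional and the range of T is closed in Y. -/
open Metric Filter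

/-- A sequence controlled by two Cauchy sequences is Cauchy. -/
private lemma cauchy_of_controlled {X Y Z : Type*} [PseudoMetricSpace X] [PseudoMetricSpace Y]
    [PseudoMetricSpace Z] {v : ℕ → X} {a : ℕ → Y} {b : ℕ → Z} {c : ℝ}
    (ha : CauchySeq a) (hb : CauchySeq b)
    (h : ∀ m n, dist (v m) (v n) ≤ c * (dist (a m) (a n) + dist (b m) (b n))) :
    CauchySeq v := by
  rw [Metric.cauchySeq_iff] at ha hb ⊢
  intro ε hε
  set c' : ℝ := max c 1 with hc'
  have hc'0 : 0 < c' := lt_of_lt_of_le one_pos (le_max_right _ _)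
  have hδ : 0 < ε / (2 * c') := by positivity
  obtain ⟨N₁, hN₁⟩ := ha _ hδ
  obtain ⟨N₂, hN₂⟩ := hb _ hδ
  refine ⟨max N₁ N₂, fun m hm n hn => ?_⟩
  have h1 := hN₁ m (le_trans (le_max_left _ _) hm) n (le_trans (le_max_left _ _) hn)
  have h2 := hN₂ m (le_trans (le_max_right _ _) hm) n (le_trans (le_max_right _ _) hn)
  have hle : dist (v m) (v n) ≤ c' * (dist (a m) (a n) + dist (b m) (b n)) := by
    refine (h m n).trans (mul_le_mul_of_nonneg_right (le_max_left _ _) ?_)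
    positivity
  calc dist (v m) (v n) ≤ c' * (dist (a m) (a n) + dist (b m) (b n)) := hle
    _ < c' * (ε / (2 * c') + ε / (2 * c')) := by
        apply mul_lt_mul_of_pos_left _ hc'0
        exact add_lt_add h1 h2
    _ = ε := by field_simp; ring

/-- **Peetre's lemma** (converse direction).  Let `X, Y, Z` be Banach spaces over `ℝ` or `ℂ`,
`T : X → Y` a bounded linear operator, and `K : X → Z` a compact linear operator.  If there is
`c > 0` with `‖x‖ ≤ c (‖Tx‖ + ‖Kx‖)` for all `x ∈ X`, then the kernel of `T` is
finite-dimensional and the range of `T` is closed in `Y`. -/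
theorem peetre_lemma_converse {𝕜 X Y Z : Type*} [RCLike 𝕜]
    [NormedAddCommGroup X] [NormedSpace 𝕜 X] [CompleteSpace X]
    [NormedAddCommGroup Y] [NormedSpace 𝕜 Y] [CompleteSpace Y]
    [NormedAddCommGroup Z] [NormedSpace 𝕜 Z] [CompleteSpace Z]
    (T : X →L[𝕜] Y) (K : X →L[𝕜] Z)
    (hKcompact : IsCompactOperator K)
    (c : ℝ) (hc : 0 < c)
    (hest : ∀ x : X, ‖x‖ ≤ c * (‖T x‖ + ‖K x‖)) :
    FiniteDimensional 𝕜 (LinearMap.ker (T : X →ₗ[𝕜] Y)) ∧ IsClosed (Set.range T) := by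
  constructor
  ·
    apply FiniteDimensional.of_isCompact_closedBall₀ (𝕜 := 𝕜) one_pos
    apply IsSeqCompact.isCompact
    intro u hu
    set w : ℕ → X := fun n => (u n : X) with hw
    have hwnorm : ∀ n, ‖w n‖ ≤ 1 := fun n => by
      simpa [hw, mem_closedBall_zero_iff] using hu n
    have hTw : ∀ n, T (w n) = 0 := fun n => (u n).2
    have hC : IsCompact (closure ((K : X →ₗ[𝕜] Z) '' closedBall 0 1)) :=
      IsCompactOperator.isCompact_closure_image_of_bounded (by exact hKcompact)
        (isBounded_closedBall)
    have hmem : ∀ n, K (w n) ∈ closure ((K : X →ₗ[𝕜] Z) '' closedBall 0 1) := fun n =>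
      subset_closure ⟨w n, mem_closedBall_zero_iff.2 (hwnorm n), rfl⟩
    obtain ⟨z, -, φ, hφ, hKconv⟩ := hC.tendsto_subseq hmem
    have hcauchy : CauchySeq (w ∘ φ) := by
      refine cauchy_of_controlled (c := c) (a := fun _ : ℕ => (0 : Y)) (b := fun n => K (w (φ n)))
        (cauchySeq_const (0 : Y)) hKconv.cauchySeq fun m n => ?_
      have := hest (w (φ m) - w (φ n))
      simp only [map_sub, hTw, sub_zero, dist_eq_norm] at this ⊢
      simpa using this
    obtain ⟨x, hx⟩ := cauchySeq_tendsto_of_complete hcauchy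
    have hxker : x ∈ LinearMap.ker (T : X →ₗ[𝕜] Y) := by
      have : IsClosed (LinearMap.ker (T : X →ₗ[𝕜] Y) : Set X) := ContinuousLinearMap.isClosed_ker T
      exact this.mem_of_tendsto hx (Filter.Eventually.of_forall fun n => (u (φ n)).2)
    refine ⟨⟨x, hxker⟩, ?_, φ, hφ, ?_⟩
    · rw [mem_closedBall_zero_iff]
      show ‖(⟨x, hxker⟩ : LinearMap.ker (T : X →ₗ[𝕜] Y))‖ ≤ 1
      have : ‖x‖ ≤ 1 := le_of_tendsto (hx.norm) (Filter.Eventually.of_forall fun n => hwnorm (φ n))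
      simpa using this
    · rw [tendsto_iff_dist_tendsto_zero]
      have : ∀ n, dist ((u ∘ φ) n) (⟨x, hxker⟩ : LinearMap.ker (T : X →ₗ[𝕜] Y)) = dist (w (φ n)) x :=
        fun n => Subtype.dist_eq _ _
      simp only [this]
      exact tendsto_iff_dist_tendsto_zero.1 hx
  ·
    set S : Submodule 𝕜 X := LinearMap.ker (T : X →ₗ[𝕜] Y) with hS
    -- Key claim: the quotient norm is controlled by ‖T x‖.
    have claim : ∃ d : ℝ, 0 < d ∧
        ∀ x : X, ‖(Submodule.Quotient.mk x : X ⧸ S)‖ ≤ d * ‖T x‖ := by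
      by_contra hcon
      push_neg at hcon
      choose x hx using fun n : ℕ => hcon (n + 1) (by positivity)
      have hpos : ∀ n, 0 < ‖(Submodule.Quotient.mk (x n) : X ⧸ S)‖ := fun n =>
        lt_of_le_of_lt (by positivity) (hx n)
      choose m hm hmlt using fun n =>
        Submodule.Quotient.norm_mk_lt (Submodule.Quotient.mk (x n) : X ⧸ S) (hpos n)
      have hTm : ∀ n, T (m n) = T (x n) := by
        intro n
        have hmem : m n - x n ∈ S := (Submodule.Quotient.eq S).1 (hm n)
        have h0 : T (m n - x n) = 0 := hmem
        rw [map_sub, sub_eq_zero] at h0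
        exact h0
      -- normalized sequence
      set a : ℕ → 𝕜 := fun n => ((‖(Submodule.Quotient.mk (x n) : X ⧸ S)‖⁻¹ : ℝ) : 𝕜) with ha
      have hanorm : ∀ n, ‖a n‖ = ‖(Submodule.Quotient.mk (x n) : X ⧸ S)‖⁻¹ := fun n => by
        rw [ha]
        simp [RCLike.norm_ofReal, abs_of_nonneg (inv_nonneg.2 (hpos n).le)]
      set w : ℕ → X := fun n => a n • m n with hwdef
      have hwnorm : ∀ n, ‖w n‖ ≤ 2 := by
        intro n
        rw [hwdef]
        simp only [norm_smul, hanorm]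
        rw [inv_mul_le_iff₀ (hpos n)]
        calc ‖m n‖ ≤ ‖(Submodule.Quotient.mk (x n) : X ⧸ S)‖
              + ‖(Submodule.Quotient.mk (x n) : X ⧸ S)‖ := (hmlt n).le
          _ = ‖(Submodule.Quotient.mk (x n) : X ⧸ S)‖ * 2 := by ring
      have hmkw : ∀ n, ‖(Submodule.Quotient.mk (w n) : X ⧸ S)‖ = 1 := by
        intro n
        rw [hwdef]
        show ‖(Submodule.Quotient.mk (a n • m n) : X ⧸ S)‖ = 1
        rw [Submodule.Quotient.mk_smul, norm_smul, hanorm, hm n]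
        exact inv_mul_cancel₀ (hpos n).ne'
      have hTwto : Filter.Tendsto (fun n => T (w n)) Filter.atTop (nhds 0) := by
        have hbound : ∀ n : ℕ, ‖T (w n)‖ ≤ 1 / ((n : ℝ) + 1) := by
          intro n
          have h1 : ‖T (w n)‖
              = ‖(Submodule.Quotient.mk (x n) : X ⧸ S)‖⁻¹ * ‖T (x n)‖ := by
            rw [hwdef]
            show ‖T (a n • m n)‖ = _
            rw [map_smul, norm_smul, hanorm, hTm]
          have h2 : ‖T (x n)‖
              ≤ ‖(Submodule.Quotient.mk (x n) : X ⧸ S)‖ / ((n : ℝ) + 1) := by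
            rw [le_div_iff₀ (by positivity)]
            nlinarith [hx n]
          have h3 := mul_le_mul_of_nonneg_left h2 (inv_nonneg.2 (hpos n).le)
          have h4 : ‖(Submodule.Quotient.mk (x n) : X ⧸ S)‖⁻¹
              * (‖(Submodule.Quotient.mk (x n) : X ⧸ S)‖ / ((n : ℝ) + 1))
              = 1 / ((n : ℝ) + 1) := by
            field_simp
            exact div_self (hpos n).ne'
          rw [h1]
          linarith
        exact squeeze_zero_norm hbound tendsto_one_div_add_atTop_nhds_zero_nat
      -- compactness
      have hC : IsCompact (closure ((K : X →ₗ[𝕜] Z) '' Metric.closedBall 0 2)) :=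
        IsCompactOperator.isCompact_closure_image_of_bounded (by exact hKcompact)
          isBounded_closedBall
      have hmem : ∀ n, K (w n) ∈ closure ((K : X →ₗ[𝕜] Z) '' Metric.closedBall 0 2) := fun n =>
        subset_closure ⟨w n, mem_closedBall_zero_iff.2 (hwnorm n), rfl⟩
      obtain ⟨z, -, φ, hφ, hKconv⟩ := hC.tendsto_subseq hmem
      have hcauchy : CauchySeq (w ∘ φ) := by
        refine cauchy_of_controlled (c := c) (a := fun n => T (w (φ n)))
          (b := fun n => K (w (φ n)))
          ((hTwto.comp hφ.tendsto_atTop).cauchySeq) hKconv.cauchySeq fun i j => ?_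
        have := hest (w (φ i) - w (φ j))
        simp only [map_sub, dist_eq_norm] at this ⊢
        exact this
      obtain ⟨wl, hwl⟩ := cauchySeq_tendsto_of_complete hcauchy
      have hTwl : T wl = 0 := by
        have h1 : Filter.Tendsto (fun n => T ((w ∘ φ) n)) Filter.atTop (nhds (T wl)) :=
          (T.continuous.tendsto wl).comp hwl
        have h2 : Filter.Tendsto (fun n => T ((w ∘ φ) n)) Filter.atTop (nhds 0) :=
          hTwto.comp hφ.tendsto_atTop
        exact tendsto_nhds_unique h1 h2
      have hmk0 : (Submodule.Quotient.mk wl : X ⧸ S) = 0 :=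
        (Submodule.Quotient.mk_eq_zero S).2 hTwl
      have hmkcont : Continuous (fun v : X => (Submodule.Quotient.mk v : X ⧸ S)) := by
        apply LipschitzWith.continuous (K := 1)
        apply LipschitzWith.of_dist_le_mul
        intro v₁ v₂
        rw [dist_eq_norm, dist_eq_norm, NNReal.coe_one, one_mul]
        have : (Submodule.Quotient.mk v₁ : X ⧸ S) - Submodule.Quotient.mk v₂
            = Submodule.Quotient.mk (v₁ - v₂) := by
          simp [Submodule.Quotient.mk_sub]
        rw [this]
        exact Submodule.Quotient.norm_mk_le S _
      have hlim : Filter.Tendsto (fun n => ‖(Submodule.Quotient.mk ((w ∘ φ) n) : X ⧸ S)‖)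
          Filter.atTop (nhds ‖(Submodule.Quotient.mk wl : X ⧸ S)‖) :=
        ((hmkcont.tendsto wl).comp hwl).norm
      have : (1 : ℝ) = ‖(Submodule.Quotient.mk wl : X ⧸ S)‖ := by
        apply tendsto_nhds_unique _ hlim
        simp only [Function.comp_apply, hmkw]
        exact tendsto_const_nhds
      rw [hmk0, norm_zero] at this
      exact one_ne_zero this
    -- use the claim: lift through the quotient
    obtain ⟨d, hd, hclaim⟩ := claim
    set Tbar₀ : (X ⧸ S) →ₗ[𝕜] Y := S.liftQ (T : X →ₗ[𝕜] Y) le_rfl with hTbar₀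
    have hb : ∀ q : X ⧸ S, ‖Tbar₀ q‖ ≤ ‖T‖ * ‖q‖ := by
      intro q
      refine le_of_forall_pos_le_add fun ε hε => ?_
      have hδ : 0 < ε / (‖T‖ + 1) := by positivity
      obtain ⟨v, rfl, hv⟩ := Submodule.Quotient.norm_mk_lt q hδ
      have h1 : Tbar₀ (Submodule.Quotient.mk v) = T v := rfl
      rw [h1]
      calc ‖T v‖ ≤ ‖T‖ * ‖v‖ := T.le_opNorm v
        _ ≤ ‖T‖ * (‖(Submodule.Quotient.mk v : X ⧸ S)‖ + ε / (‖T‖ + 1)) :=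
            mul_le_mul_of_nonneg_left hv.le (norm_nonneg T)
        _ = ‖T‖ * ‖(Submodule.Quotient.mk v : X ⧸ S)‖ + ‖T‖ * (ε / (‖T‖ + 1)) := by ring
        _ ≤ ‖T‖ * ‖(Submodule.Quotient.mk v : X ⧸ S)‖ + ε := by
            have : ‖T‖ * (ε / (‖T‖ + 1)) ≤ ε := by
              rw [mul_div_assoc']
              rw [div_le_iff₀ (by positivity)]
              nlinarith [norm_nonneg T]
            linarith
    set Tbar : (X ⧸ S) →L[𝕜] Y := Tbar₀.mkContinuous ‖T‖ hb with hTbar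
    have hanti : AntilipschitzWith (⟨d, hd.le⟩ : NNReal) Tbar := by
      apply ContinuousLinearMap.antilipschitz_of_bound
      intro q
      obtain ⟨v, rfl⟩ := Submodule.Quotient.mk_surjective S q
      have h1 : Tbar (Submodule.Quotient.mk v) = T v := rfl
      rw [h1]
      exact hclaim v
    have hclosed : IsClosed (Set.range Tbar) :=
      hanti.isClosed_range Tbar.uniformContinuous
    have hrange : Set.range (T : X → Y) = Set.range Tbar := by
      ext y
      constructor
      · rintro ⟨v, rfl⟩
        exact ⟨Submodule.Quotient.mk v, rfl⟩
      · rintro ⟨q, rfl⟩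
        obtain ⟨v, rfl⟩ := Submodule.Quotient.mk_surjective S q
        exact ⟨v, rfl⟩
    rw [hrange]
    exact hclosed
end

section
/- (Hohberg–Krein-type lemma.) Let X and Y be Banach spaces (over ℝ or ℂ), let T : X → Y be a bounded linear operator whose range is closed and has finite codimension in Y, and let D be a dense linear subspace of Y. Then there exists a finite-dimensional linear subspace F ⊆ D such that Range(T) + F = Y. In particular, every y ∈ Y can be written as y = Tx + d with x ∈ X and d ∈ D. -/
/-- **Hohberg–Krein-type lemma.**  Let `X, Y` be Banach spaces over `ℝ` or `ℂ`, let `T : X → Y`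
be a bounded linear operator whose range is closed and of finite codimension in `Y`, and let
`D` be a dense linear subspace of `Y`.  Then there is a finite-dimensional subspace `F ⊆ D`
with `Range(T) + F = Y`; in particular, every `y ∈ Y` is of the form `y = Tx + d` with
`x ∈ X` and `d ∈ D`. -/
theorem hohberg_krein_lemma {𝕜 X Y : Type*} [RCLike 𝕜]
    [NormedAddCommGroup X] [NormedSpace 𝕜 X] [CompleteSpace X]
    [NormedAddCommGroup Y] [NormedSpace 𝕜 Y] [CompleteSpace Y]
    (T : X →L[𝕜] Y)
    (hclosed : IsClosed (Set.range T))
    (hcodim : FiniteDimensional 𝕜 (Y ⧸ LinearMap.range (T : X →ₗ[𝕜] Y)))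
    (D : Submodule 𝕜 Y) (hD : Dense (D : Set Y)) :
    ∃ F : Submodule 𝕜 Y, FiniteDimensional 𝕜 F ∧ F ≤ D ∧
      LinearMap.range (T : X →ₗ[𝕜] Y) ⊔ F = ⊤ ∧
      ∀ y : Y, ∃ x : X, ∃ d ∈ D, y = T x + d := by
  set R : Submodule 𝕜 Y := LinearMap.range (T : X →ₗ[𝕜] Y) with hR
  have hRclosed : IsClosed (R : Set Y) := by
    have : (R : Set Y) = Set.range T := by
      ext y; simp [hR, LinearMap.mem_range, ContinuousLinearMap.coe_coe]
    rw [this]; exact hclosed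
  haveI : T2Space (Y ⧸ R) := by
    haveI : IsClosed (R.toAddSubgroup : Set Y) := hRclosed
    infer_instance
  -- the quotient map is continuous
  have hcont : Continuous R.mkQ := continuous_quot_mk
  -- image of D in the quotient is dense
  have hdense : Dense ((D.map R.mkQ : Submodule 𝕜 (Y ⧸ R)) : Set (Y ⧸ R)) := by
    have hsurj : Function.Surjective R.mkQ := Submodule.mkQ_surjective R
    intro z
    obtain ⟨y, rfl⟩ := hsurj z
    have : R.mkQ y ∈ closure (R.mkQ '' (D : Set Y)) := by
      have h1 : R.mkQ '' closure (D : Set Y) ⊆ closure (R.mkQ '' (D : Set Y)) :=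
        image_closure_subset_closure_image hcont
      have h2 : y ∈ closure (D : Set Y) := hD y
      exact h1 ⟨y, h2, rfl⟩
    simpa [Submodule.map_coe] using this
  -- a dense submodule of a finite-dimensional T2 space is everything
  have htop : D.map R.mkQ = ⊤ := by
    have hclosed' : IsClosed ((D.map R.mkQ : Submodule 𝕜 (Y ⧸ R)) : Set (Y ⧸ R)) :=
      Submodule.closed_of_finiteDimensional _
    have : closure ((D.map R.mkQ : Submodule 𝕜 (Y ⧸ R)) : Set (Y ⧸ R)) = Set.univ :=
      hdense.closure_eq
    rw [hclosed'.closure_eq] at this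
    refine Submodule.eq_top_iff'.2 fun x => ?_
    have hx : x ∈ ((D.map R.mkQ : Submodule 𝕜 (Y ⧸ R)) : Set (Y ⧸ R)) := by
      rw [this]; trivial
    exact hx
  -- choose a basis of the quotient and lift it into D
  obtain ⟨s, b⟩ := Module.Free.exists_basis (R := 𝕜) (M := Y ⧸ R)
  haveI : Finite s := Module.Finite.finite_basis b
  have hlift : ∀ i : s, ∃ d ∈ D, R.mkQ d = b i := by
    intro i
    have : b i ∈ D.map R.mkQ := htop ▸ Submodule.mem_top
    obtain ⟨d, hd, hdi⟩ := this
    exact ⟨d, hd, hdi⟩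
  choose d hdD hdb using hlift
  set F := Submodule.span 𝕜 (Set.range d) with hF
  have hsup : R ⊔ F = ⊤ := by
    rw [← Submodule.map_mkQ_eq_top, hF, Submodule.map_span]
    have hcomp : (⇑R.mkQ ∘ d) = ⇑b := funext hdb
    rw [← Set.range_comp, hcomp, b.span_eq]
  have hFD : F ≤ D := by
    rw [hF, Submodule.span_le]
    rintro _ ⟨i, rfl⟩
    exact hdD i
  refine ⟨F, ?_, hFD, hsup, ?_⟩
  · exact FiniteDimensional.span_of_finite 𝕜 (Set.finite_range d)
  · intro y
    have hy : y ∈ R ⊔ F := hsup ▸ Submodule.mem_top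
    obtain ⟨r, hr, f, hf, rfl⟩ := Submodule.mem_sup.1 hy
    obtain ⟨x, rfl⟩ := hr
    exact ⟨x, f, hFD hf, rfl⟩
end
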